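/- For the disjoint union G_mstar of q copies of the m-vertex star graph (n = qm vertices, q ≥ m ≥ 2), every bitstring h that is a Z_2-linear combination of the basis bitstrings supported on the star centers and has Hamming weight at least m lies in C(G_mstar, n, m); in particular C(G_mstar, n, m) ≠ ∅. -/

import Mathlib

open Finset

/-- Hamming weight of a bitstring. -/
def wt {ι : Type*} [Fintype ι] (k : ι → ZMod 2) : ℕ :=
  (univ.filter fun i => k i ≠ 0).card

/-- Hamming weight of the bitwise OR of two bitstrings. -/
def wtOr {ι : Type*} [Fintype ι] (k l : ι → ZMod 2) : ℕ :=
  (univ.filter fun i => k i ≠ 0 ∨ l i ≠ 0).card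

/-- `Z(G,n,d) = {k : wt(k ∨ (A·k)) ≤ d - 1}`. -/
def Zset {ι : Type*} [Fintype ι] (A : Matrix ι ι (ZMod 2)) (d : ℕ) :
    Set (ι → ZMod 2) :=
  {k | wtOr k (A.mulVec k) ≤ d - 1}

/-- `Z^⊥(G,n,d) = {h : h·k = 0 for all k ∈ Z(G,n,d)}`. -/
def Zperp {ι : Type*} [Fintype ι] (A : Matrix ι ι (ZMod 2)) (d : ℕ) :
    Set (ι → ZMod 2) :=
  {h | ∀ k ∈ Zset A d, ∑ i, h i * k i = 0}

/-- `W(G,n,d) = {A·m + l : wt(m ∨ l) ≤ d - 1}`. -/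
def Wset {ι : Type*} [Fintype ι] (A : Matrix ι ι (ZMod 2)) (d : ℕ) :
    Set (ι → ZMod 2) :=
  {h | ∃ m l, wtOr m l ≤ d - 1 ∧ A.mulVec m + l = h}

/-- `C(G,n,d) = Z^⊥(G,n,d) \ W(G,n,d)`. -/
def Cset {ι : Type*} [Fintype ι] (A : Matrix ι ι (ZMod 2)) (d : ℕ) :
    Set (ι → ZMod 2) :=
  Zperp A d \ Wset A d

/-- Block-diagonal adjacency matrix of `q` disjoint copies of the star graph on
`m + 2` vertices: vertex `(i, j)` is vertex `j` of copy `i`, with `j = 0` the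
center of each star. -/
def Amstar (q m : ℕ) :
    Matrix (Fin q × Fin (m + 2)) (Fin q × Fin (m + 2)) (ZMod 2) :=
  fun p q' => if p.1 = q'.1 ∧ ((p.2 = 0 ∧ q'.2 ≠ 0) ∨ (q'.2 = 0 ∧ p.2 ≠ 0)) then 1 else 0

lemma Amstar_mulVec_ne (q m : ℕ) (k : Fin q × Fin (m + 2) → ZMod 2) (i : Fin q)
    (j : Fin (m + 2)) (hj : j ≠ 0) : (Amstar q m).mulVec k (i, j) = k (i, 0) := by
  simp only [Matrix.mulVec, dotProduct, Amstar, ite_mul, one_mul, zero_mul]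
  rw [Finset.sum_eq_single ((i, 0) : Fin q × Fin (m + 2))]
  · simp [hj]
  · intro b _ hb
    rw [if_neg]
    rintro ⟨h1, (⟨hj0, _⟩ | ⟨hb0, _⟩)⟩
    · exact hj hj0
    · exact hb (Prod.ext h1.symm hb0)
  · intro h; exact absurd (Finset.mem_univ _) h

lemma center_zero (q m : ℕ) (k : Fin q × Fin (m + 2) → ZMod 2)
    (hk : k ∈ Zset (Amstar q m) (m + 2)) (i : Fin q) : k (i, 0) = 0 := by
  by_contra hne
  have hsub : (univ.image fun j : Fin (m + 2) => ((i, j) : Fin q × Fin (m + 2))) ⊆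
      univ.filter (fun p => k p ≠ 0 ∨ (Amstar q m).mulVec k p ≠ 0) := by
    intro p hp
    simp only [mem_image, mem_univ, true_and] at hp
    obtain ⟨j, rfl⟩ := hp
    simp only [mem_filter, mem_univ, true_and]
    by_cases hj : j = 0
    · subst hj; exact Or.inl hne
    · exact Or.inr (by rw [Amstar_mulVec_ne q m k i j hj]; exact hne)
  have hcard : (univ.image fun j : Fin (m + 2) => ((i, j) : Fin q × Fin (m + 2))).card
      = m + 2 := by
    rw [Finset.card_image_of_injective _ (fun a b hab => by simpa using hab)]
    simp
  have hle := Finset.card_le_card hsub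
  have hk' : wtOr k ((Amstar q m).mulVec k) ≤ m + 2 - 1 := hk
  unfold wtOr at hk'
  omega

/-- For the disjoint union of `q` copies of the `(m+2)`-vertex star graph
(`n = q(m+2)` vertices, `q ≥ m + 2 ≥ 2`), every bitstring `h` supported on the star
centers (i.e. a `ZMod 2`-linear combination of the center basis bitstrings) with
Hamming weight at least `m + 2` lies in `C(G_mstar, n, m+2)`; in particular
`C(G_mstar, n, m+2) ≠ ∅`. -/
theorem stmt9 (q m : ℕ) (hq : m + 2 ≤ q) :
    (∀ h : Fin q × Fin (m + 2) → ZMod 2,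
        (∀ p, p.2 ≠ 0 → h p = 0) → m + 2 ≤ wt h → h ∈ Cset (Amstar q m) (m + 2)) ∧
    (Cset (Amstar q m) (m + 2)).Nonempty := by
  classical
  have main : ∀ h : Fin q × Fin (m + 2) → ZMod 2,
      (∀ p, p.2 ≠ 0 → h p = 0) → m + 2 ≤ wt h → h ∈ Cset (Amstar q m) (m + 2) := by
    intro h hsupp hwt
    constructor
    · -- h ∈ Zperp
      intro k hk
      apply Finset.sum_eq_zero
      intro p _
      by_cases hp : p.2 = 0
      · have hk0 : k p = 0 := by
          have := center_zero q m k hk p.1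
          rwa [show (p.1, (0 : Fin (m + 2))) = p from Prod.ext rfl hp.symm] at this
        rw [hk0, mul_zero]
      · rw [hsupp p hp, zero_mul]
    · -- h ∉ Wset
      rintro ⟨m', l, hwl, hml⟩
      have key : ∀ i : Fin q, h (i, 0) ≠ 0 →
          ∃ p : Fin q × Fin (m + 2), p.1 = i ∧ (m' p ≠ 0 ∨ l p ≠ 0) := by
        intro i hi
        rw [← hml] at hi
        by_cases hl : l (i, 0) ≠ 0
        · exact ⟨(i, 0), rfl, Or.inr hl⟩
        · push_neg at hl
          have hA : (Amstar q m).mulVec m' (i, 0) ≠ 0 := by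
            intro h0
            apply hi
            simp only [Pi.add_apply, h0, hl, add_zero]
          by_contra hc
          push_neg at hc
          apply hA
          simp only [Matrix.mulVec, dotProduct, Amstar, ite_mul, one_mul, zero_mul]
          apply Finset.sum_eq_zero
          intro b _
          split_ifs with hcond
          · obtain ⟨h1, h2⟩ := hcond
            rcases h2 with ⟨_, _⟩ | ⟨_, h02⟩
            · exact (hc b h1.symm).1
            · exact absurd rfl h02
          · rfl
      have hwq : wt h ≤ (univ.filter fun i : Fin q => h (i, 0) ≠ 0).card := by
        unfold wt
        apply Finset.card_le_card_of_injOn (fun p => p.1)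
        · intro p hp
          simp only [mem_coe, mem_filter, mem_univ, true_and] at hp ⊢
          have hp2 : p.2 = 0 := by
            by_contra hp2; exact hp (hsupp p hp2)
          rwa [show (p.1, (0 : Fin (m + 2))) = p from Prod.ext rfl hp2.symm]
        · intro a ha b hb hab
          simp only [coe_filter, Set.mem_setOf_eq, mem_univ, true_and] at ha hb
          have ha2 : a.2 = 0 := by
            by_contra h2; exact ha (hsupp a h2)
          have hb2 : b.2 = 0 := by
            by_contra h2; exact hb (hsupp b h2)
          exact Prod.ext hab (ha2.trans hb2.symm)
      have hq2 : (univ.filter fun i : Fin q => h (i, 0) ≠ 0).card ≤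
          (univ.filter fun p : Fin q × Fin (m + 2) => m' p ≠ 0 ∨ l p ≠ 0).card := by
        apply Finset.card_le_card_of_injOn
          (fun i => if hi : h (i, 0) ≠ 0 then (key i hi).choose else (i, 0))
        · intro i hi
          simp only [mem_coe, mem_filter, mem_univ, true_and] at hi
          dsimp only
          rw [dif_pos hi]
          simp only [mem_coe, mem_filter, mem_univ, true_and]
          exact (key i hi).choose_spec.2
        · intro a ha b hb hab
          simp only [coe_filter, Set.mem_setOf_eq, mem_univ, true_and] at ha hb
          dsimp only at hab
          rw [dif_pos ha, dif_pos hb] at hab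
          have h1 := (key a ha).choose_spec.1
          have h2 := (key b hb).choose_spec.1
          rw [← h1, ← h2, hab]
      have hT : (univ.filter fun p : Fin q × Fin (m + 2) => m' p ≠ 0 ∨ l p ≠ 0).card
          ≤ m + 2 - 1 := hwl
      omega
  refine ⟨main, ⟨fun p => if p.2 = 0 then 1 else 0, main _ ?_ ?_⟩⟩
  · intro p hp; simp [hp]
  · have hle : q ≤ wt (fun p : Fin q × Fin (m + 2) => if p.2 = 0 then (1 : ZMod 2) else 0) := by
      unfold wt
      have := Finset.card_le_card_of_injOn
        (fun i : Fin q => ((i, 0) : Fin q × Fin (m + 2)))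
        (s := univ)
        (t := univ.filter fun p : Fin q × Fin (m + 2) =>
          (if p.2 = 0 then (1 : ZMod 2) else 0) ≠ 0)
        (by intro i _; simp) (by intro a _ b _ hab; simpa using hab)
      simpa using this
    omega
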